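/- Lower bound for a nonnegative linear combination of rewards: let R₁, …, R_n : S × A × S → ℝ be reward functions and c₁, …, c_n ≥ 0. Let Q_i* be the fixed point of the optimal Bellman operator with reward R_i, let Q_i^μ be the fixed point of the pessimistic Bellman operator with reward R_i, and let Q* be the fixed point of the optimal Bellman operator with reward 𝓡 = Σ_i c_i R_i. Then for every index i, c_i Q_i* + Σ_{j ≠ i} c_j Q_j^μ ≤ Q* pointwise; consequently max_i [c_i Q_i* + Σ_{j ≠ i} c_j Q_j^μ] ≤ Q* pointwise. -/

import Mathlib

/-- Maximum of a real-valued function over a nonempty finite type. -/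
noncomputable def qmax {I : Type*} [Fintype I] [Nonempty I] (f : I → ℝ) : ℝ :=
  Finset.univ.sup' Finset.univ_nonempty f

/-- Minimum of a real-valued function over a nonempty finite type. -/
noncomputable def qmin {I : Type*} [Fintype I] [Nonempty I] (f : I → ℝ) : ℝ :=
  Finset.univ.inf' Finset.univ_nonempty f

/-- Standard Bellman (optimality) operator:
`(T Q)(s,a) = Σ_{s'} p(s'|s,a) [R(s,a,s') + γ max_{a'} Q(s',a')]`. -/
noncomputable def Tstd {S A : Type*} [Fintype S] [Fintype A] [Nonempty A]
    (γ : ℝ) (R : S → A → S → ℝ) (p : S → A → S → ℝ) (Q : S → A → ℝ) : S → A → ℝ :=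
  fun s a => ∑ s', p s a s' * (R s a s' + γ * qmax (Q s'))

/-- Pessimistic Bellman operator:
`(T^μ Q)(s,a) = Σ_{s'} p(s'|s,a) [R(s,a,s') + γ min_{a'} Q(s',a')]`. -/
noncomputable def Tmu {S A : Type*} [Fintype S] [Fintype A] [Nonempty A]
    (γ : ℝ) (R : S → A → S → ℝ) (p : S → A → S → ℝ) (Q : S → A → ℝ) : S → A → ℝ :=
  fun s a => ∑ s', p s a s' * (R s a s' + γ * qmin (Q s'))

/-- Lower bound for a nonnegative linear combination of rewards: with `Q_i*` the optimal and
`Q_i^μ` the pessimistic fixed points for reward `R_i`, and `Q*` the optimal fixed point for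
`𝓡 = Σ_i c_i R_i` with `c_i ≥ 0`, for every `i`,
`c_i Q_i* + Σ_{j ≠ i} c_j Q_j^μ ≤ Q*` pointwise, and hence the maximum over `i` of the
left-hand sides is also `≤ Q*` pointwise. -/
theorem linear_combination_lower_bound {S A : Type*} [Fintype S] [Fintype A]
    [Nonempty S] [Nonempty A]
    (γ : ℝ) (hγ0 : 0 ≤ γ) (hγ1 : γ < 1)
    (p : S → A → S → ℝ)
    (hp0 : ∀ s a s', 0 ≤ p s a s') (hp1 : ∀ s a, ∑ s', p s a s' = 1)
    (n : ℕ) (hn : 0 < n)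
    (R : Fin n → S → A → S → ℝ) (c : Fin n → ℝ) (hc : ∀ i, 0 ≤ c i)
    (Qi : Fin n → S → A → ℝ) (hQi : ∀ i, Tstd γ (R i) p (Qi i) = Qi i)
    (Qmu : Fin n → S → A → ℝ) (hQmu : ∀ i, Tmu γ (R i) p (Qmu i) = Qmu i)
    (Qstar : S → A → ℝ)
    (hQstar : Tstd γ (fun s a s' => ∑ i, c i * R i s a s') p Qstar = Qstar) :
    (∀ i, ∀ s a,
        c i * Qi i s a + ∑ j ∈ Finset.univ.erase i, c j * Qmu j s a ≤ Qstar s a) ∧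
      ∀ s a,
        (Finset.univ.sup' (Finset.univ_nonempty_iff.mpr (Fin.pos_iff_nonempty.mp hn))
            fun i => c i * Qi i s a + ∑ j ∈ Finset.univ.erase i, c j * Qmu j s a) ≤
          Qstar s a := by
  have key : ∀ i, ∀ s a,
      c i * Qi i s a + ∑ j ∈ Finset.univ.erase i, c j * Qmu j s a ≤ Qstar s a := by
    intro i
    set G : S → A → ℝ := fun s a =>
      c i * Qi i s a + ∑ j ∈ Finset.univ.erase i, c j * Qmu j s a with hG
    -- Step 1: G ≤ T* G  (with combined reward)
    have step1 : ∀ s a, G s a ≤ Tstd γ (fun s a s' => ∑ j, c j * R j s a s') p G s a := by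
      intro s a
      have eQi : Qi i s a = ∑ s', p s a s' * (R i s a s' + γ * qmax (Qi i s')) :=
        (congrFun (congrFun (hQi i) s) a).symm
      have eQmu : ∀ j, Qmu j s a = ∑ s', p s a s' * (R j s a s' + γ * qmin (Qmu j s')) :=
        fun j => (congrFun (congrFun (hQmu j) s) a).symm
      have h1 : G s a = ∑ s', p s a s' * ((∑ j, c j * R j s a s')
          + γ * (c i * qmax (Qi i s')
            + ∑ j ∈ Finset.univ.erase i, c j * qmin (Qmu j s'))) := by
        simp only [hG, eQi, eQmu]
        rw [Finset.mul_sum]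
        conv_lhs => rw [show (∑ j ∈ Finset.univ.erase i,
          c j * ∑ s', p s a s' * (R j s a s' + γ * qmin (Qmu j s')))
          = ∑ s', ∑ j ∈ Finset.univ.erase i,
              c j * (p s a s' * (R j s a s' + γ * qmin (Qmu j s'))) by
            rw [Finset.sum_comm]
            exact Finset.sum_congr rfl fun j _ => Finset.mul_sum _ _ _]
        rw [← Finset.sum_add_distrib]
        refine Finset.sum_congr rfl fun s' _ => ?_
        rw [← Finset.add_sum_erase _ (fun j => c j * R j s a s') (Finset.mem_univ i)]
        have hexp : ∀ j ∈ Finset.univ.erase i,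
            c j * (p s a s' * (R j s a s' + γ * qmin (Qmu j s')))
            = p s a s' * (c j * R j s a s') + p s a s' * γ * (c j * qmin (Qmu j s')) := by
          intro j _; ring
        rw [Finset.sum_congr rfl hexp, Finset.sum_add_distrib,
          ← Finset.mul_sum, ← Finset.mul_sum]
        ring
      rw [h1, Tstd]
      refine Finset.sum_le_sum fun s' _ => ?_
      refine mul_le_mul_of_nonneg_left ?_ (hp0 s a s')
      refine add_le_add_right (mul_le_mul_of_nonneg_left ?_ hγ0) _
      obtain ⟨a', -, ha'⟩ := Finset.exists_mem_eq_sup' (Finset.univ_nonempty) (Qi i s')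
      have hle : G s' a' ≤ qmax (G s') := Finset.le_sup' _ (Finset.mem_univ a')
      refine le_trans ?_ hle
      rw [hG]
      simp only []
      have h2 : qmax (Qi i s') = Qi i s' a' := ha'
      rw [h2]
      refine add_le_add_right (Finset.sum_le_sum fun j _ => ?_) _
      exact mul_le_mul_of_nonneg_left (Finset.inf'_le _ (Finset.mem_univ a')) (hc j)
    -- Step 2: G ≤ T* G implies G ≤ Qstar (contraction argument)
    haveI : Nonempty (S × A) := inferInstance
    set D : ℝ := Finset.univ.sup' Finset.univ_nonempty
      (fun sa : S × A => G sa.1 sa.2 - Qstar sa.1 sa.2) with hDdef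
    have hD : ∀ s a, G s a - Qstar s a ≤ D :=
      fun s a => Finset.le_sup' (fun sa : S × A => G sa.1 sa.2 - Qstar sa.1 sa.2) (Finset.mem_univ ((s, a) : S × A))
    have contract : ∀ s a, G s a - Qstar s a ≤ γ * D := by
      intro s a
      have eQs : Qstar s a = ∑ s', p s a s' *
          ((∑ j, c j * R j s a s') + γ * qmax (Qstar s')) :=
        (congrFun (congrFun hQstar s) a).symm
      have h3 : G s a - Qstar s a ≤
          ∑ s', p s a s' * (γ * (qmax (G s') - qmax (Qstar s'))) := by
        have := step1 s a
        rw [Tstd] at this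
        rw [eQs]
        calc G s a - ∑ s', p s a s' * ((∑ j, c j * R j s a s') + γ * qmax (Qstar s'))
            ≤ (∑ s', p s a s' * ((∑ j, c j * R j s a s') + γ * qmax (G s')))
              - ∑ s', p s a s' * ((∑ j, c j * R j s a s') + γ * qmax (Qstar s')) := by
              linarith
          _ = ∑ s', (p s a s' * ((∑ j, c j * R j s a s') + γ * qmax (G s'))
              - p s a s' * ((∑ j, c j * R j s a s') + γ * qmax (Qstar s'))) := by
              rw [Finset.sum_sub_distrib]
          _ = ∑ s', p s a s' * (γ * (qmax (G s') - qmax (Qstar s'))) := by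
              refine Finset.sum_congr rfl fun s' _ => ?_; ring
      have h4 : ∀ s', qmax (G s') - qmax (Qstar s') ≤ D := by
        intro s'
        have : qmax (G s') ≤ qmax (Qstar s') + D := by
          refine Finset.sup'_le _ _ fun a' _ => ?_
          have := hD s' a'
          have h5 : Qstar s' a' ≤ qmax (Qstar s') := Finset.le_sup' _ (Finset.mem_univ a')
          linarith
        linarith
      calc G s a - Qstar s a ≤ ∑ s', p s a s' * (γ * (qmax (G s') - qmax (Qstar s'))) := h3
        _ ≤ ∑ s', p s a s' * (γ * D) := by
            refine Finset.sum_le_sum fun s' _ => ?_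
            exact mul_le_mul_of_nonneg_left
              (mul_le_mul_of_nonneg_left (h4 s') hγ0) (hp0 s a s')
        _ = γ * D := by rw [← Finset.sum_mul, hp1]; ring
    have hDle : D ≤ γ * D := by
      refine Finset.sup'_le _ _ fun sa _ => contract sa.1 sa.2
    have hD0 : D ≤ 0 := by nlinarith
    intro s a
    have h6 : G s a ≤ Qstar s a := by linarith [hD s a]
    exact h6
  refine ⟨key, fun s a => ?_⟩
  exact Finset.sup'_le _ _ fun i _ => key i s a
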